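/- With w_ν(ω,σ,I) as in the recursive construction and I_m the right subinterval of I of length 3^{-m}|I|, one has for every ν ≥ 1 and 0 ≤ m ≤ k−2: ∫_{I_m} w_ν(ω,σ,I) ≤ ω Σ_{j=m}^{k−1} |I_j| ≤ (9ω/2)|I_{m+1}|. -/

import Mathlib

set_option maxHeartbeats 1000000


open MeasureTheory

/-- `ε = 3^{-k}`. -/
noncomputable def eps (k : ℕ) : ℝ := (3:ℝ) ^ (-(k:ℤ))

/-- `p = (1/(3ε))((1+ε)/2 + 4ε²/(1+ε))`. -/
noncomputable def pp (k : ℕ) : ℝ := (1/(3 * eps k)) * ((1 + eps k)/2 + 4 * (eps k)^2/(1 + eps k))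

/-- `u = √p + √(p−1)`, the larger root of `u + 1/u = 2√p`. -/
noncomputable def uu (k : ℕ) : ℝ := Real.sqrt (pp k) + Real.sqrt (pp k - 1)

lemma eps_pos (k : ℕ) : 0 < eps k := by unfold eps; positivity

lemma eps_le (k : ℕ) (hk : 2 ≤ k) : eps k ≤ 1/9 := by
  have : (3:ℝ) ^ (-(k:ℤ)) ≤ (3:ℝ) ^ (-(2:ℤ)) := by
    apply zpow_le_zpow_right₀ (by norm_num)
    omega
  simpa [eps] using this.trans_eq (by norm_num)

lemma one_le_pp (k : ℕ) (hk : 2 ≤ k) : 1 ≤ pp k := by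
  have he := eps_pos k
  have he9 := eps_le k hk
  have h1 : 0 ≤ 4 * (eps k)^2/(1 + eps k) := by positivity
  have h2 : 3 * eps k ≤ (1 + eps k)/2 + 4 * (eps k)^2/(1 + eps k) := by nlinarith
  rw [pp, one_div_mul_eq_div, le_div_iff₀ (by positivity), one_mul]
  exact h2

lemma pp_pos (k : ℕ) (hk : 2 ≤ k) : 0 < pp k := lt_of_lt_of_le one_pos (one_le_pp k hk)

lemma sqrt_pp_pos (k : ℕ) (hk : 2 ≤ k) : 0 < Real.sqrt (pp k) :=
  Real.sqrt_pos.2 (pp_pos k hk)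

lemma uu_pos (k : ℕ) (hk : 2 ≤ k) : 0 < uu k := by
  have := sqrt_pp_pos k hk
  have : 0 ≤ Real.sqrt (pp k - 1) := Real.sqrt_nonneg _
  unfold uu; linarith [sqrt_pp_pos k hk]

lemma uu_add_inv (k : ℕ) (hk : 2 ≤ k) : uu k + (uu k)⁻¹ = 2 * Real.sqrt (pp k) := by
  have hp1 := one_le_pp k hk
  have h1 : Real.sqrt (pp k) ^ 2 = pp k := Real.sq_sqrt (by linarith)
  have h2 : Real.sqrt (pp k - 1) ^ 2 = pp k - 1 := Real.sq_sqrt (by linarith)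
  have hinv : (uu k)⁻¹ = Real.sqrt (pp k) - Real.sqrt (pp k - 1) := by
    apply inv_eq_of_mul_eq_one_right
    unfold uu; nlinarith
  rw [hinv]; unfold uu; ring

lemma pp_key (k : ℕ) (hk : 2 ≤ k) :
    3 * eps k * pp k = (1 + eps k)/2 + 4 * (eps k)^2/(1 + eps k) := by
  have he := eps_pos k
  rw [pp]; field_simp

lemma sum_geom (n : ℕ) : ∑ j ∈ Finset.range n, (3:ℝ)^(-(j:ℤ)) = (3/2)*(1-(3:ℝ)⁻¹^n) := by
  have : ∀ j : ℕ, (3:ℝ)^(-(j:ℤ)) = (3⁻¹:ℝ)^j := by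
    intro j; rw [zpow_neg, zpow_natCast, inv_pow]
  simp_rw [this]
  rw [geom_sum_eq (by norm_num)]
  field_simp; ring

lemma three_pow_sub (k : ℕ) (hk : 1 ≤ k) : ((3:ℝ)⁻¹)^(k-1) = 3 * eps k := by
  have : ((3:ℝ)⁻¹)^(k-1) = (3:ℝ)^(-((k-1:ℕ):ℤ)) := by
    rw [zpow_neg, zpow_natCast, inv_pow]
  rw [this, eps, Nat.cast_sub hk, Nat.cast_one,
    show (-((k:ℤ)-1)) = 1 + -(k:ℤ) by ring, zpow_add₀ (by norm_num : (3:ℝ) ≠ 0)]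
  norm_num

lemma three_zpow_one_sub (k : ℕ) : (3:ℝ)^(1-(k:ℤ)) = 3 * eps k := by
  rw [eps, show (1-(k:ℤ)) = 1 + -(k:ℤ) by ring, zpow_add₀ (by norm_num : (3:ℝ) ≠ 0)]
  norm_num

/-- The recursively defined weights `w_ν(ω, σ, I)` of the paper, on `I = [a, a+h)`
(the dual parameter `σ` is determined by `ωσ = p` and is omitted).
`W k ν ω a h` equals `w_ν(ω, p/ω, [a, a+h))` and vanishes outside `[a, a+h)`.

For `ν = 0`: `w₀ = (ω/√p)(u χ_{I₋} + u⁻¹ χ_{I₊})`.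

For `ν ≥ 1`, with `I_m` the right subinterval of `I` of length `3^{-m}|I|` and `J^{(i)}`
the `i`-th third of `J`:
`w_ν = (ω/p)(Σ_{m=0}^{k-2} χ_{I_m^{(1)}} + χ_{I_{k-1}^{(1)} ∪ I_{k-1}^{(2)}}
+ (4ε/(1+ε)) χ_{I_{k-1}^{(3)}}) + Σ_{m=0}^{k-2} w_{ν-1}(2ω, σ/2, I_m^{(2)})`. -/
noncomputable def W (k : ℕ) : ℕ → ℝ → ℝ → ℝ → ℝ → ℝ
  | 0, ω, a, h, x =>
      Set.indicator (Set.Ico a (a + h/2)) (fun _ => ω / Real.sqrt (pp k) * uu k) x +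
      Set.indicator (Set.Ico (a + h/2) (a + h)) (fun _ => ω / Real.sqrt (pp k) / uu k) x
  | (ν+1), ω, a, h, x =>
      (∑ m ∈ Finset.range (k-1),
        Set.indicator (Set.Ico (a + h - (3:ℝ)^(-(m:ℤ))*h) (a + h - (2/3)*(3:ℝ)^(-(m:ℤ))*h))
          (fun _ => ω / pp k) x) +
      Set.indicator (Set.Ico (a + h - (3:ℝ)^(1-(k:ℤ))*h) (a + h - (1/3)*(3:ℝ)^(1-(k:ℤ))*h))
        (fun _ => ω / pp k) x +
      Set.indicator (Set.Ico (a + h - (1/3)*(3:ℝ)^(1-(k:ℤ))*h) (a + h))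
        (fun _ => (4 * eps k/(1 + eps k)) * (ω / pp k)) x +
      ∑ m ∈ Finset.range (k-1),
        W k ν (2*ω) (a + h - (2/3)*(3:ℝ)^(-(m:ℤ))*h) ((1/3)*(3:ℝ)^(-(m:ℤ))*h) x

/-- For `ν ≥ 1` and `0 ≤ m ≤ k−2`:
`∫_{I_m} w_ν(ω,σ,I) ≤ ω Σ_{j=m}^{k−1} |I_j| ≤ (9ω/2)|I_{m+1}|`,
where `I_j = [a+h−3^{-j}h, a+h)` is the right subinterval of `I` of length `3^{-j}h`. -/

lemma integrable_ind (c a b : ℝ) :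
    Integrable (Set.indicator (Set.Ico a b) (fun _ => c)) := by
  rw [integrable_indicator_iff measurableSet_Ico]
  exact integrableOn_const measure_Ico_lt_top.ne

lemma integral_ind (c a b : ℝ) (hab : a ≤ b) :
    ∫ x, Set.indicator (Set.Ico a b) (fun _ => c) x = c * (b - a) := by
  rw [integral_indicator_const c measurableSet_Ico, measureReal_def, Real.volume_Ico,
    ENNReal.toReal_ofReal (by linarith), smul_eq_mul, mul_comm]

lemma ind_nonneg (c a b : ℝ) (hc : 0 ≤ c) (x : ℝ) :
    0 ≤ Set.indicator (Set.Ico a b) (fun _ => c) x :=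
  Set.indicator_nonneg (fun _ _ => hc) x

lemma W_integrable (k : ℕ) : ∀ ν ω a h, Integrable (W k ν ω a h) := by
  intro ν
  induction ν with
  | zero => intro ω a h
            exact (integrable_ind _ _ _).add (integrable_ind _ _ _)
  | succ ν ih =>
      intro ω a h
      exact ((((integrable_finset_sum _ (fun j _ => integrable_ind _ _ _)).add
        (integrable_ind _ _ _)).add (integrable_ind _ _ _)).add
        (integrable_finset_sum _ (fun j _ => ih _ _ _)))

lemma W_nonneg (k : ℕ) (hk : 2 ≤ k) : ∀ ν ω a h x, 0 ≤ ω → 0 ≤ W k ν ω a h x := by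
  have hp : 0 < pp k := pp_pos k hk
  have hu : 0 < uu k := uu_pos k hk
  have he : 0 < eps k := eps_pos k
  intro ν
  induction ν with
  | zero =>
      intro ω a h x hω
      refine add_nonneg (ind_nonneg _ _ _ ?_ x) (ind_nonneg _ _ _ ?_ x) <;> positivity
  | succ ν ih =>
      intro ω a h x hω
      refine add_nonneg (add_nonneg (add_nonneg ?_ ?_) ?_) ?_
      · exact Finset.sum_nonneg fun j _ => ind_nonneg _ _ _ (by positivity) x
      · exact ind_nonneg _ _ _ (by positivity) x
      · exact ind_nonneg _ _ _ (by positivity) x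
      · exact Finset.sum_nonneg fun j _ => ih (2*ω) _ _ x (by linarith)

lemma W_zero_right (k : ℕ) : ∀ ν ω a h x, 0 ≤ h → a + h ≤ x → W k ν ω a h x = 0 := by
  intro ν
  induction ν with
  | zero =>
      intro ω a h x hh hx
      rw [W]
      rw [Set.indicator_of_notMem (by simp only [Set.mem_Ico]; push_neg; intro; linarith),
          Set.indicator_of_notMem (by simp only [Set.mem_Ico]; push_neg; intro; linarith)]
      norm_num
  | succ ν ih =>
      intro ω a h x hh hx
      have hz : ∀ j : ℕ, (0:ℝ) < (3:ℝ)^(-(j:ℤ)) := fun j => by positivity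
      have hz2 : (0:ℝ) < (3:ℝ)^(1-(k:ℤ)) := by positivity
      rw [W]
      rw [Finset.sum_eq_zero (fun j _ => Set.indicator_of_notMem
            (by simp only [Set.mem_Ico]; push_neg; intro _
                nlinarith [mul_nonneg ((hz j).le) hh]) _),
          Set.indicator_of_notMem (s := Set.Ico (a + h - (3:ℝ)^(1-(k:ℤ))*h) _)
            (by simp only [Set.mem_Ico]; push_neg; intro _
                nlinarith [mul_nonneg hz2.le hh]),
          Set.indicator_of_notMem (s := Set.Ico (a + h - (1/3)*(3:ℝ)^(1-(k:ℤ))*h) _)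
            (by simp only [Set.mem_Ico]; push_neg; intro _; exact hx),
          Finset.sum_eq_zero (fun j _ => ih _ _ _ _ (by positivity)
            (by nlinarith [mul_nonneg ((hz j).le) hh]))]
      norm_num

lemma W_integral (k : ℕ) (hk : 2 ≤ k) : ∀ ν ω a h, 0 ≤ h → ∫ x, W k ν ω a h x = ω * h := by
  have hp : (0:ℝ) < pp k := lt_of_lt_of_le one_pos (one_le_pp k hk)
  have hs : (0:ℝ) < Real.sqrt (pp k) := Real.sqrt_pos.2 hp
  have hu := uu_pos k hk
  have he := eps_pos k
  intro ν
  induction ν with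
  | zero =>
      intro ω a h hh
      simp only [W]
      rw [integral_add (integrable_ind _ _ _) (integrable_ind _ _ _),
        integral_ind _ _ _ (by linarith), integral_ind _ _ _ (by linarith)]
      have h2 := uu_add_inv k hk
      have hs' : Real.sqrt (pp k) ≠ 0 := ne_of_gt hs
      have hu' : uu k ≠ 0 := ne_of_gt hu
      have hsq : Real.sqrt (pp k) ^ 2 = pp k := Real.sq_sqrt hp.le
      have h2' : uu k ^ 2 + 1 = 2 * Real.sqrt (pp k) * uu k := by
        field_simp at h2; linear_combination h2
      field_simp
      linear_combination (ω * h) * h2'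
  | succ ν ih =>
      intro ω a h hh
      have hz : ∀ j:ℕ, (0:ℝ) ≤ (3:ℝ)^(-(j:ℤ)) := fun j => by positivity
      have h3k : (3:ℝ)^(1-(k:ℤ)) = 3 * eps k := three_zpow_one_sub k
      simp only [W]
      have iA : Integrable (fun x => ∑ j ∈ Finset.range (k-1),
          Set.indicator (Set.Ico (a + h - (3:ℝ)^(-(j:ℤ))*h) (a + h - (2/3)*(3:ℝ)^(-(j:ℤ))*h))
            (fun _ => ω / pp k) x) :=
        integrable_finset_sum _ (fun j _ => integrable_ind _ _ _)
      have iB : Integrable (fun x => Set.indicator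
          (Set.Ico (a + h - (3:ℝ)^(1-(k:ℤ))*h) (a + h - (1/3)*(3:ℝ)^(1-(k:ℤ))*h))
          (fun _ => ω / pp k) x) := integrable_ind _ _ _
      have iC : Integrable (fun x => Set.indicator (Set.Ico (a + h - (1/3)*(3:ℝ)^(1-(k:ℤ))*h) (a + h))
          (fun _ => (4 * eps k/(1 + eps k)) * (ω / pp k)) x) := integrable_ind _ _ _
      have iD : Integrable (fun x => ∑ j ∈ Finset.range (k-1),
          W k ν (2*ω) (a + h - (2/3)*(3:ℝ)^(-(j:ℤ))*h) ((1/3)*(3:ℝ)^(-(j:ℤ))*h) x) :=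
        integrable_finset_sum _ (fun j _ => W_integrable k _ _ _ _)
      have iAB : Integrable (fun x => (∑ j ∈ Finset.range (k-1),
          Set.indicator (Set.Ico (a + h - (3:ℝ)^(-(j:ℤ))*h) (a + h - (2/3)*(3:ℝ)^(-(j:ℤ))*h))
            (fun _ => ω / pp k) x) +
          Set.indicator (Set.Ico (a + h - (3:ℝ)^(1-(k:ℤ))*h) (a + h - (1/3)*(3:ℝ)^(1-(k:ℤ))*h))
          (fun _ => ω / pp k) x) := iA.add iB
      have iABC : Integrable (fun x => ((∑ j ∈ Finset.range (k-1),
          Set.indicator (Set.Ico (a + h - (3:ℝ)^(-(j:ℤ))*h) (a + h - (2/3)*(3:ℝ)^(-(j:ℤ))*h))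
            (fun _ => ω / pp k) x) +
          Set.indicator (Set.Ico (a + h - (3:ℝ)^(1-(k:ℤ))*h) (a + h - (1/3)*(3:ℝ)^(1-(k:ℤ))*h))
          (fun _ => ω / pp k) x) +
          Set.indicator (Set.Ico (a + h - (1/3)*(3:ℝ)^(1-(k:ℤ))*h) (a + h))
          (fun _ => (4 * eps k/(1 + eps k)) * (ω / pp k)) x) := iAB.add iC
      rw [integral_add iABC iD, integral_add iAB iC,
        integral_add iA iB, integral_finset_sum _ (fun j _ => integrable_ind _ _ _),
        integral_finset_sum _ (fun j _ => W_integrable k _ _ _ _)]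
      have eA : ∀ j ∈ Finset.range (k-1), (∫ x, Set.indicator
          (Set.Ico (a + h - (3:ℝ)^(-(j:ℤ))*h) (a + h - (2/3)*(3:ℝ)^(-(j:ℤ))*h))
          (fun _ => ω / pp k) x) = (ω / pp k * (1/3) * h) * (3:ℝ)^(-(j:ℤ)) := by
        intro j _
        rw [integral_ind _ _ _ (by nlinarith [mul_nonneg (hz j) hh])]; ring
      have eD : ∀ j ∈ Finset.range (k-1),
          (∫ x, W k ν (2*ω) (a + h - (2/3)*(3:ℝ)^(-(j:ℤ))*h) ((1/3)*(3:ℝ)^(-(j:ℤ))*h) x)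
          = (2 * ω * (1/3) * h) * (3:ℝ)^(-(j:ℤ)) := by
        intro j _
        rw [ih _ _ _ (by positivity)]; ring
      rw [Finset.sum_congr rfl eA, Finset.sum_congr rfl eD, ← Finset.mul_sum, ← Finset.mul_sum,
        sum_geom, three_pow_sub k (by omega),
        integral_ind _ _ _ (by nlinarith [mul_nonneg (mul_pos (by norm_num : (0:ℝ)<3) he).le hh]),
        integral_ind _ _ _ (by nlinarith [mul_nonneg (mul_pos (by norm_num : (0:ℝ)<3) he).le hh]),
        h3k]
      have key := pp_key k hk
      have h1e : (0:ℝ) < 1 + eps k := by linarith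
      have key' : 6 * eps k * pp k * (1 + eps k) = (1 + eps k)^2 + 8 * (eps k)^2 := by
        field_simp at key; linear_combination key
      have hP : pp k ≠ 0 := ne_of_gt hp
      have h1e' : (1:ℝ) + eps k ≠ 0 := ne_of_gt h1e
      field_simp
      linear_combination (-ω*h) * key'

lemma three_zpow_natsub (k : ℕ) (hk : 1 ≤ k) : (3:ℝ)^(-(((k-1:ℕ)):ℤ)) = 3 * eps k := by
  rw [← three_zpow_one_sub k]
  congr 1
  rw [Nat.cast_sub hk]; push_cast; ring

theorem W_tail_integral (k : ℕ) (hk : 2 ≤ k) (ω σ a h : ℝ) (hω : 0 < ω) (hσ : 0 < σ)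
    (hωσ : ω * σ = pp k) (hh : 0 < h) (ν : ℕ) (hν : 1 ≤ ν) (m : ℕ) (hm : m ≤ k - 2) :
    (∫ x in Set.Ico (a + h - (3:ℝ)^(-(m:ℤ))*h) (a + h), W k ν ω a h x ≤
      ω * ∑ j ∈ Finset.Icc m (k-1), (3:ℝ)^(-(j:ℤ))*h) ∧
    ω * ∑ j ∈ Finset.Icc m (k-1), (3:ℝ)^(-(j:ℤ))*h ≤
      (9*ω/2) * ((3:ℝ)^(-((m:ℤ)+1))*h) := by
  have he := eps_pos k
  have he9 := eps_le k hk
  have hp1 := one_le_pp k hk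
  have hp : (0:ℝ) < pp k := by linarith
  have hm' : m ≤ k - 1 := by omega
  have hIcc : Finset.Icc m (k-1) = Finset.Ico m k := by
    rw [← Finset.Ico_add_one_right_eq_Icc]; congr 1; omega
  have hzm : (0:ℝ) < (3:ℝ)^(-(m:ℤ)) := by positivity
  have hz : ∀ j:ℕ, (0:ℝ) < (3:ℝ)^(-(j:ℤ)) := fun j => by positivity
  constructor
  · -- main integral bound
    obtain ⟨ν', rfl⟩ : ∃ n, ν = n + 1 := ⟨ν - 1, by omega⟩
    have h3k : (3:ℝ)^(1-(k:ℤ)) = 3 * eps k := three_zpow_one_sub k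
    set s : Set ℝ := Set.Ico (a + h - (3:ℝ)^(-(m:ℤ))*h) (a + h) with hs
    simp only [W, h3k]
    -- split the integral
    have iA : Integrable (fun x => ∑ j ∈ Finset.range (k-1),
        Set.indicator (Set.Ico (a + h - (3:ℝ)^(-(j:ℤ))*h) (a + h - (2/3)*(3:ℝ)^(-(j:ℤ))*h))
          (fun _ => ω / pp k) x) (volume.restrict s) :=
      (integrable_finset_sum _ (fun j _ => integrable_ind _ _ _)).restrict
    have iB : Integrable (fun x => Set.indicator
        (Set.Ico (a + h - (3*eps k)*h) (a + h - (1/3)*(3*eps k)*h))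
        (fun _ => ω / pp k) x) (volume.restrict s) := (integrable_ind _ _ _).restrict
    have iC : Integrable (fun x => Set.indicator (Set.Ico (a + h - (1/3)*(3*eps k)*h) (a + h))
        (fun _ => (4 * eps k/(1 + eps k)) * (ω / pp k)) x) (volume.restrict s) :=
      (integrable_ind _ _ _).restrict
    have iD : Integrable (fun x => ∑ j ∈ Finset.range (k-1),
        W k ν' (2*ω) (a + h - (2/3)*(3:ℝ)^(-(j:ℤ))*h) ((1/3)*(3:ℝ)^(-(j:ℤ))*h) x)
        (volume.restrict s) :=
      (integrable_finset_sum _ (fun j _ => W_integrable k _ _ _ _)).restrict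
    have iAB : Integrable (fun x => (∑ j ∈ Finset.range (k-1),
        Set.indicator (Set.Ico (a + h - (3:ℝ)^(-(j:ℤ))*h) (a + h - (2/3)*(3:ℝ)^(-(j:ℤ))*h))
          (fun _ => ω / pp k) x) +
        Set.indicator (Set.Ico (a + h - (3*eps k)*h) (a + h - (1/3)*(3*eps k)*h))
        (fun _ => ω / pp k) x) (volume.restrict s) := iA.add iB
    have iABC : Integrable (fun x => ((∑ j ∈ Finset.range (k-1),
        Set.indicator (Set.Ico (a + h - (3:ℝ)^(-(j:ℤ))*h) (a + h - (2/3)*(3:ℝ)^(-(j:ℤ))*h))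
          (fun _ => ω / pp k) x) +
        Set.indicator (Set.Ico (a + h - (3*eps k)*h) (a + h - (1/3)*(3*eps k)*h))
        (fun _ => ω / pp k) x) +
        Set.indicator (Set.Ico (a + h - (1/3)*(3*eps k)*h) (a + h))
        (fun _ => (4 * eps k/(1 + eps k)) * (ω / pp k)) x) (volume.restrict s) := iAB.add iC
    rw [integral_add iABC iD, integral_add iAB iC, integral_add iA iB,
      integral_finset_sum _ (fun j _ => (integrable_ind _ _ _).restrict),
      integral_finset_sum _ (fun j _ => (W_integrable k _ _ _ _).restrict)]
    -- vanishing of low-index terms on s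
    have hle0 : ∀ j : ℕ, j < m → (3:ℝ)^(-(m:ℤ)) ≤ (1/3)*(3:ℝ)^(-(j:ℤ)) := by
      intro j hjm
      have h1 : (3:ℝ)^(-(m:ℤ)) ≤ (3:ℝ)^(-(j:ℤ)-1) := by
        apply zpow_le_zpow_right₀ (by norm_num)
        have : (j:ℤ) + 1 ≤ (m:ℤ) := by exact_mod_cast hjm
        omega
      calc (3:ℝ)^(-(m:ℤ)) ≤ (3:ℝ)^(-(j:ℤ)-1) := h1
        _ = (1/3)*(3:ℝ)^(-(j:ℤ)) := by
            rw [show (-(j:ℤ)-1) = (-1) + -(j:ℤ) by ring, zpow_add₀ (by norm_num : (3:ℝ)≠0)]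
            norm_num
    have hxs : ∀ j : ℕ, j < m → ∀ x ∈ s, a + h - (1/3)*(3:ℝ)^(-(j:ℤ))*h ≤ x := by
      intro j hjm x hx
      have h1 : a + h - (3:ℝ)^(-(m:ℤ))*h ≤ x := hx.1
      nlinarith [mul_le_mul_of_nonneg_right (hle0 j hjm) hh.le]
    have hA : ∑ j ∈ Finset.range (k-1), (∫ x in s, Set.indicator
        (Set.Ico (a + h - (3:ℝ)^(-(j:ℤ))*h) (a + h - (2/3)*(3:ℝ)^(-(j:ℤ))*h))
        (fun _ => ω / pp k) x) =
        ∑ j ∈ Finset.Ico m (k-1), (∫ x in s, Set.indicator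
        (Set.Ico (a + h - (3:ℝ)^(-(j:ℤ))*h) (a + h - (2/3)*(3:ℝ)^(-(j:ℤ))*h))
        (fun _ => ω / pp k) x) := by
      rw [Finset.range_eq_Ico, ← Finset.sum_Ico_consecutive _ (Nat.zero_le m) hm',
        Finset.sum_eq_zero, zero_add]
      intro j hj
      have hjm : j < m := (Finset.mem_Ico.1 hj).2
      exact setIntegral_eq_zero_of_forall_eq_zero (fun x hx => Set.indicator_of_notMem
        (by simp only [Set.mem_Ico]; push_neg; intro _
            nlinarith [hxs j hjm x hx, mul_pos (hz j) hh]) _)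
    have hD : ∑ j ∈ Finset.range (k-1), (∫ x in s,
        W k ν' (2*ω) (a + h - (2/3)*(3:ℝ)^(-(j:ℤ))*h) ((1/3)*(3:ℝ)^(-(j:ℤ))*h) x) =
        ∑ j ∈ Finset.Ico m (k-1), (∫ x in s,
        W k ν' (2*ω) (a + h - (2/3)*(3:ℝ)^(-(j:ℤ))*h) ((1/3)*(3:ℝ)^(-(j:ℤ))*h) x) := by
      rw [Finset.range_eq_Ico, ← Finset.sum_Ico_consecutive _ (Nat.zero_le m) hm',
        Finset.sum_eq_zero, zero_add]
      intro j hj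
      have hjm : j < m := (Finset.mem_Ico.1 hj).2
      exact setIntegral_eq_zero_of_forall_eq_zero (fun x hx => W_zero_right k _ _ _ _ _
        (by positivity) (by nlinarith [hxs j hjm x hx]))
    rw [hA, hD]
    -- RHS split
    have hsum : ω * ∑ j ∈ Finset.Icc m (k-1), (3:ℝ)^(-(j:ℤ))*h =
        (∑ j ∈ Finset.Ico m (k-1), ω * ((3:ℝ)^(-(j:ℤ))*h)) + ω * ((3:ℝ)^(-(((k-1:ℕ)):ℤ))*h) := by
      rw [hIcc, show Finset.Ico m k = Finset.Ico m ((k-1)+1) by congr 1; omega,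
        Finset.sum_Ico_succ_top hm', mul_add, Finset.mul_sum]
    rw [hsum]
    -- bound the middle sum termwise and the tail indicators
    have hmid : ∀ j ∈ Finset.Ico m (k-1),
        ((∫ x in s, Set.indicator (Set.Ico (a + h - (3:ℝ)^(-(j:ℤ))*h)
            (a + h - (2/3)*(3:ℝ)^(-(j:ℤ))*h)) (fun _ => ω / pp k) x) +
          ∫ x in s, W k ν' (2*ω) (a + h - (2/3)*(3:ℝ)^(-(j:ℤ))*h) ((1/3)*(3:ℝ)^(-(j:ℤ))*h) x)
          ≤ ω * ((3:ℝ)^(-(j:ℤ))*h) := by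
      intro j _
      have t1 : (∫ x in s, Set.indicator (Set.Ico (a + h - (3:ℝ)^(-(j:ℤ))*h)
          (a + h - (2/3)*(3:ℝ)^(-(j:ℤ))*h)) (fun _ => ω / pp k) x) ≤
          (ω / pp k) * ((1/3) * (3:ℝ)^(-(j:ℤ)) * h) := by
        have := setIntegral_le_integral (s := s) (integrable_ind (ω / pp k)
          (a + h - (3:ℝ)^(-(j:ℤ))*h) (a + h - (2/3)*(3:ℝ)^(-(j:ℤ))*h))
          (Filter.Eventually.of_forall (ind_nonneg _ _ _ (by positivity)))
        rw [integral_ind _ _ _ (by nlinarith [mul_pos (hz j) hh])] at this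
        calc _ ≤ _ := this
          _ = (ω / pp k) * ((1/3) * (3:ℝ)^(-(j:ℤ)) * h) := by ring
      have t2 : (∫ x in s, W k ν' (2*ω) (a + h - (2/3)*(3:ℝ)^(-(j:ℤ))*h)
          ((1/3)*(3:ℝ)^(-(j:ℤ))*h) x) ≤ 2*ω * ((1/3)*(3:ℝ)^(-(j:ℤ))*h) := by
        have := setIntegral_le_integral (s := s)
          (W_integrable k ν' (2*ω) (a + h - (2/3)*(3:ℝ)^(-(j:ℤ))*h) ((1/3)*(3:ℝ)^(-(j:ℤ))*h))
          (Filter.Eventually.of_forall (fun x => W_nonneg k hk ν' (2*ω)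
            (a + h - (2/3)*(3:ℝ)^(-(j:ℤ))*h) ((1/3)*(3:ℝ)^(-(j:ℤ))*h) x (by linarith)))
        rw [W_integral k hk ν' (2*ω) (a + h - (2/3)*(3:ℝ)^(-(j:ℤ))*h)
          ((1/3)*(3:ℝ)^(-(j:ℤ))*h) (by positivity)] at this
        exact this
      have hdp : ω / pp k ≤ ω := div_le_self hω.le hp1
      have hq := mul_pos (hz j) hh
      nlinarith [mul_le_mul_of_nonneg_right hdp (by positivity : (0:ℝ) ≤ (1/3)*(3:ℝ)^(-(j:ℤ))*h)]
    have htail :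
        (∫ x in s, Set.indicator (Set.Ico (a + h - (3*eps k)*h) (a + h - (1/3)*(3*eps k)*h))
            (fun _ => ω / pp k) x) +
        (∫ x in s, Set.indicator (Set.Ico (a + h - (1/3)*(3*eps k)*h) (a + h))
            (fun _ => (4 * eps k/(1 + eps k)) * (ω / pp k)) x) ≤
        ω * ((3:ℝ)^(-(((k-1:ℕ)):ℤ))*h) := by
      have t1 : (∫ x in s, Set.indicator (Set.Ico (a + h - (3*eps k)*h)
          (a + h - (1/3)*(3*eps k)*h)) (fun _ => ω / pp k) x) ≤ (ω / pp k) * (2 * eps k * h) := by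
        have := setIntegral_le_integral (s := s)
          (integrable_ind (ω / pp k) (a + h - (3*eps k)*h) (a + h - (1/3)*(3*eps k)*h))
          (Filter.Eventually.of_forall (ind_nonneg _ _ _ (by positivity)))
        rw [integral_ind _ _ _ (by nlinarith [mul_pos he hh])] at this
        calc _ ≤ _ := this
          _ = (ω / pp k) * (2 * eps k * h) := by ring
      have t2 : (∫ x in s, Set.indicator (Set.Ico (a + h - (1/3)*(3*eps k)*h) (a + h))
          (fun _ => (4 * eps k/(1 + eps k)) * (ω / pp k)) x) ≤
          (4 * eps k/(1 + eps k)) * (ω / pp k) * (eps k * h) := by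
        have := setIntegral_le_integral (s := s)
          (integrable_ind ((4 * eps k/(1 + eps k)) * (ω / pp k)) (a + h - (1/3)*(3*eps k)*h) (a + h))
          (Filter.Eventually.of_forall (ind_nonneg _ _ _ (by positivity)))
        rw [integral_ind _ _ _ (by nlinarith [mul_pos he hh])] at this
        calc _ ≤ _ := this
          _ = (4 * eps k/(1 + eps k)) * (ω / pp k) * (eps k * h) := by ring
      rw [three_zpow_natsub k (by omega)]
      have hdp : ω / pp k ≤ ω := div_le_self hω.le hp1
      have h4 : 4 * eps k/(1 + eps k) ≤ 1 := by
        rw [div_le_one (by linarith)]; linarith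
      have hdp0 : 0 ≤ ω / pp k := by positivity
      nlinarith [mul_pos he hh, mul_le_mul_of_nonneg_right hdp (mul_pos he hh).le,
        mul_le_mul_of_nonneg_right h4 (mul_nonneg hdp0 (mul_pos he hh).le)]
    have hAD : (∑ j ∈ Finset.Ico m (k-1), (∫ x in s, Set.indicator
        (Set.Ico (a + h - (3:ℝ)^(-(j:ℤ))*h) (a + h - (2/3)*(3:ℝ)^(-(j:ℤ))*h))
        (fun _ => ω / pp k) x)) +
        (∑ j ∈ Finset.Ico m (k-1), (∫ x in s,
        W k ν' (2*ω) (a + h - (2/3)*(3:ℝ)^(-(j:ℤ))*h) ((1/3)*(3:ℝ)^(-(j:ℤ))*h) x)) ≤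
        ∑ j ∈ Finset.Ico m (k-1), ω * ((3:ℝ)^(-(j:ℤ))*h) := by
      rw [← Finset.sum_add_distrib]
      exact Finset.sum_le_sum hmid
    linarith [hAD, htail]
  · -- second inequality
    have hsum2 : ∑ j ∈ Finset.Icc m (k-1), (3:ℝ)^(-(j:ℤ)) ≤ (3/2) * (3:ℝ)^(-(m:ℤ)) := by
      rw [hIcc, Finset.sum_Ico_eq_sum_range]
      have : ∀ i ∈ Finset.range (k-m), (3:ℝ)^(-((m+i:ℕ):ℤ)) =
          (3:ℝ)^(-(m:ℤ)) * (3:ℝ)^(-(i:ℤ)) := by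
        intro i _
        rw [← zpow_add₀ (by norm_num : (3:ℝ)≠0)]
        congr 1; push_cast; ring
      rw [Finset.sum_congr rfl this, ← Finset.mul_sum, sum_geom]
      have h0 : (0:ℝ) ≤ (3:ℝ)⁻¹^(k-m) := by positivity
      nlinarith
    have h3m1 : (3:ℝ)^(-((m:ℤ)+1)) = (3:ℝ)^(-(m:ℤ)) * (1/3) := by
      rw [show (-((m:ℤ)+1)) = -(m:ℤ) + (-1) by ring, zpow_add₀ (by norm_num : (3:ℝ)≠0)]
      norm_num
    have : ∑ j ∈ Finset.Icc m (k-1), (3:ℝ)^(-(j:ℤ))*h ≤ (3/2) * (3:ℝ)^(-(m:ℤ)) * h := by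
      rw [← Finset.sum_mul]
      exact mul_le_mul_of_nonneg_right hsum2 hh.le
    rw [h3m1]
    nlinarith
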